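/- Let X and Y be finite types and let p be a strictly positive probability mass function on (X×Y)^{k+2} satisfying the bipartite Markov property. Then the multi-time-step transfer entropy is bounded above by the single-time-step transfer entropy: I(X_k : Y_{k+1} | (Y_0,…,Y_k)) ≤ I(X_k : Y_{k+1} | Y_k). (Discrete-time form of the hierarchy inequality T̄_{X→Y} ≥ T_{X→Y} of Eq. (14).) -/

import Mathlib

open Finset

/-- Marginal (pushforward) of a pmf `p` on `Ω` along an observable `f`. -/
def margin {Ω α : Type*} [Fintype Ω] [DecidableEq α] (p : Ω → ℝ) (f : Ω → α) (a : α) : ℝ :=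
  ∑ ω : Ω, if f ω = a then p ω else 0

/-- Conditional probability `p(a | b)` of observable `f` given observable `g`. -/
noncomputable def condProb {Ω α β : Type*} [Fintype Ω] [DecidableEq α] [DecidableEq β]
    (p : Ω → ℝ) (f : Ω → α) (g : Ω → β) (a : α) (b : β) : ℝ :=
  margin p (fun ω => (f ω, g ω)) (a, b) / margin p g b

/-- Mutual information `I(f : g)` of observables `f` and `g`. -/
noncomputable def mutualInfo {Ω α β : Type*} [Fintype Ω] [Fintype α] [Fintype β]
    [DecidableEq α] [DecidableEq β] (p : Ω → ℝ) (f : Ω → α) (g : Ω → β) : ℝ :=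
  ∑ a : α, ∑ b : β,
    margin p (fun ω => (f ω, g ω)) (a, b) *
      Real.log (margin p (fun ω => (f ω, g ω)) (a, b) / (margin p f a * margin p g b))

/-- Conditional mutual information `I(f : g | h)` of observables `f`, `g` given `h`. -/
noncomputable def condMI {Ω α β γ : Type*} [Fintype Ω] [Fintype α] [Fintype β] [Fintype γ]
    [DecidableEq α] [DecidableEq β] [DecidableEq γ]
    (p : Ω → ℝ) (f : Ω → α) (g : Ω → β) (h : Ω → γ) : ℝ :=
  ∑ a : α, ∑ b : β, ∑ c : γ,
    margin p (fun ω => (f ω, g ω, h ω)) (a, b, c) *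
      Real.log ((margin p (fun ω => (f ω, g ω, h ω)) (a, b, c) / margin p h c) /
        ((margin p (fun ω => (f ω, h ω)) (a, c) / margin p h c) *
          (margin p (fun ω => (g ω, h ω)) (b, c) / margin p h c)))

/-- The bipartite Markov property for a pmf on trajectories `(x_0,y_0),…,(x_{k+1},y_{k+1})`:
for every `0 ≤ j ≤ k`,
`p(x_{j+1}, y_{j+1} | x_0,…,x_j, y_0,…,y_j) = p(x_{j+1} | x_j, y_j) · p(y_{j+1} | x_j, y_j)`. -/
def BipartiteMarkov {X Y : Type*} [Fintype X] [Fintype Y] [DecidableEq X] [DecidableEq Y]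
    (k : ℕ) (p : (Fin (k + 2) → X × Y) → ℝ) : Prop :=
  ∀ j : Fin (k + 1), ∀ h : Fin (j.1 + 1) → X × Y, ∀ x' : X, ∀ y' : Y,
    condProb p (fun t => t j.succ)
        (fun t (i : Fin (j.1 + 1)) => t (Fin.castLE (Nat.succ_le_succ j.isLt.le) i))
        (x', y') h =
      condProb p (fun t => (t j.succ).1) (fun t => t j.castSucc) x' (h (Fin.last j.1)) *
        condProb p (fun t => (t j.succ).2) (fun t => t j.castSucc) y' (h (Fin.last j.1))

section aux
variable {Ω α β : Type*} [Fintype Ω]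

lemma margin_pos [DecidableEq α] (p : Ω → ℝ) (hp : ∀ ω, 0 < p ω) (f : Ω → α) (a : α)
    (h : ∃ ω, f ω = a) : 0 < margin p f a := by
  obtain ⟨ω0, hω0⟩ := h
  refine Finset.sum_pos' (fun ω _ => ?_) ⟨ω0, Finset.mem_univ _, ?_⟩
  · split <;> [exact (hp ω).le; rfl]
  · simp [hω0, hp ω0]

lemma sum_margin [Fintype α] [DecidableEq α] (p : Ω → ℝ) (f : Ω → α) :
    ∑ a : α, margin p f a = ∑ ω, p ω := by
  unfold margin
  rw [Finset.sum_comm]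
  simp

lemma margin_comp [Fintype α] [DecidableEq α] [DecidableEq β]
    (p : Ω → ℝ) (f : Ω → α) (g : α → β) (b : β) :
    margin p (fun ω => g (f ω)) b = ∑ a : α, if g a = b then margin p f a else 0 := by
  unfold margin
  have h : ∀ a : α, (if g a = b then ∑ ω : Ω, if f ω = a then p ω else 0 else 0)
      = ∑ ω : Ω, if g a = b ∧ f ω = a then p ω else 0 := by
    intro a
    by_cases hga : g a = b
    · simp only [hga, if_true, true_and]
    · simp [hga]
  simp only [h]
  rw [Finset.sum_comm]
  refine Finset.sum_congr rfl fun ω _ => ?_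
  rw [Finset.sum_eq_single (f ω)] <;> simp +contextual [eq_comm]

lemma margin_factor [Fintype α] [DecidableEq α] [DecidableEq β]
    (p : Ω → ℝ) (u : Ω → β) (v : Ω → α) (ρ : α → β) (hu : ∀ ω, u ω = ρ (v ω)) (b : β) :
    margin p u b = ∑ a : α, if ρ a = b then margin p v a else 0 := by
  rw [show u = fun ω => ρ (v ω) from funext hu]
  exact margin_comp p v ρ b

lemma sum_fiber {γ : Type*} [Fintype α] [Fintype γ] [DecidableEq γ]
    (F : α → ℝ) (z : α → γ) (G : γ → ℝ) :
    ∑ c : γ, (∑ a : α, if z a = c then F a else 0) * G c = ∑ a : α, F a * G (z a) := by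
  have h : ∀ c : γ, (∑ a : α, if z a = c then F a else 0) * G c
      = ∑ a : α, if z a = c then F a * G c else 0 := by
    intro c
    rw [Finset.sum_mul]
    exact Finset.sum_congr rfl fun a _ => by split <;> simp
  simp only [h]
  rw [Finset.sum_comm]
  refine Finset.sum_congr rfl fun a _ => ?_
  rw [Finset.sum_ite_eq]
  simp

lemma gibbs {ι : Type*} [Fintype ι] (u v : ι → ℝ) (hu : ∀ i, 0 < u i) (hv : ∀ i, 0 < v i)
    (h : ∑ i, v i ≤ ∑ i, u i) : 0 ≤ ∑ i, u i * Real.log (u i / v i) := by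
  have key : ∑ i, u i * Real.log (v i / u i) ≤ ∑ i, (v i - u i) := by
    refine Finset.sum_le_sum fun i _ => ?_
    have h1 := Real.log_le_sub_one_of_pos (div_pos (hv i) (hu i))
    have h2 : u i * Real.log (v i / u i) ≤ u i * (v i / u i - 1) :=
      mul_le_mul_of_nonneg_left h1 (hu i).le
    have h3 : u i * (v i / u i - 1) = v i - u i := by
      rw [mul_sub, mul_div_cancel₀ _ (hu i).ne', mul_one]
    linarith
  have key2 : ∀ i : ι, u i * Real.log (u i / v i) = -(u i * Real.log (v i / u i)) := by
    intro i
    rw [Real.log_div (hu i).ne' (hv i).ne', Real.log_div (hv i).ne' (hu i).ne']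
    ring
  simp only [key2]
  rw [Finset.sum_neg_distrib]
  simp only [Finset.sum_sub_distrib] at key
  linarith

end aux

lemma condMI_comp_le {Ω α β γ δ : Type*} [Fintype Ω] [Fintype α] [Fintype β] [Fintype γ]
    [Fintype δ] [DecidableEq α] [DecidableEq β] [DecidableEq γ] [DecidableEq δ]
    (p : Ω → ℝ) (hpos : ∀ ω, 0 < p ω) (hnorm : ∑ ω, p ω = 1)
    (A : Ω → α) (B : Ω → β) (H : Ω → γ) (Z : γ → δ)
    (hsurj : ∀ a b h, ∃ ω, A ω = a ∧ B ω = b ∧ H ω = h)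
    (hCI : ∀ a b h,
      margin p (fun ω => (A ω, B ω, H ω)) (a, b, h) *
        margin p (fun ω => (A ω, Z (H ω))) (a, Z h) =
      margin p (fun ω => (A ω, B ω, Z (H ω))) (a, b, Z h) *
        margin p (fun ω => (A ω, H ω)) (a, h))
    (hZ : Function.Surjective Z) : condMI p A B H ≤ condMI p A B (fun ω => Z (H ω)) := by
  classical
  have fABZ : ∀ a b d, margin p (fun ω => (A ω, B ω, Z (H ω))) (a, b, d)
      = ∑ h : γ, if Z h = d then margin p (fun ω => (A ω, B ω, H ω)) (a, b, h) else 0 := by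
    intro a b d
    rw [margin_factor p _ (fun ω => (A ω, B ω, H ω)) (fun x => (x.1, x.2.1, Z x.2.2))
      (fun ω => rfl) (a, b, d)]
    rw [Fintype.sum_prod_type]
    simp [Fintype.sum_prod_type, Prod.mk.injEq, ite_and, Finset.sum_ite_eq', Finset.sum_ite_eq]
  have fAZ : ∀ a d, margin p (fun ω => (A ω, Z (H ω))) (a, d)
      = ∑ h : γ, if Z h = d then margin p (fun ω => (A ω, H ω)) (a, h) else 0 := by
    intro a d
    rw [margin_factor p _ (fun ω => (A ω, H ω)) (fun x => (x.1, Z x.2))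
      (fun ω => rfl) (a, d)]
    rw [Fintype.sum_prod_type]
    simp [Fintype.sum_prod_type, Prod.mk.injEq, ite_and, Finset.sum_ite_eq', Finset.sum_ite_eq]
  have fBZ : ∀ b d, margin p (fun ω => (B ω, Z (H ω))) (b, d)
      = ∑ h : γ, if Z h = d then margin p (fun ω => (B ω, H ω)) (b, h) else 0 := by
    intro b d
    rw [margin_factor p _ (fun ω => (B ω, H ω)) (fun x => (x.1, Z x.2))
      (fun ω => rfl) (b, d)]
    rw [Fintype.sum_prod_type]
    simp [Fintype.sum_prod_type, Prod.mk.injEq, ite_and, Finset.sum_ite_eq', Finset.sum_ite_eq]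
  have fZ : ∀ d, margin p (fun ω => Z (H ω)) d
      = ∑ h : γ, if Z h = d then margin p H h else 0 :=
    fun d => margin_comp p H Z d
  have fBZb : ∀ d, margin p (fun ω => Z (H ω)) d
      = ∑ b : β, margin p (fun ω => (B ω, Z (H ω))) (b, d) := by
    intro d
    rw [margin_factor p _ (fun ω => (B ω, Z (H ω))) (fun x => x.2) (fun ω => rfl) d]
    rw [Fintype.sum_prod_type]
    simp [Fintype.sum_prod_type, Finset.sum_ite_eq', Finset.sum_ite_eq]
  have fBHa : ∀ b h, margin p (fun ω => (B ω, H ω)) (b, h)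
      = ∑ a : α, margin p (fun ω => (A ω, B ω, H ω)) (a, b, h) := by
    intro b h
    rw [margin_factor p _ (fun ω => (A ω, B ω, H ω)) (fun x => x.2) (fun ω => rfl) (b, h)]
    rw [Fintype.sum_prod_type]
    refine Finset.sum_congr rfl fun a _ => ?_
    simp [Fintype.sum_prod_type, Finset.sum_ite_eq', Finset.sum_ite_eq]

  -- nonemptiness
  have hΩ : Nonempty Ω := by
    by_contra hc
    rw [not_nonempty_iff] at hc
    rw [Finset.univ_eq_empty, Finset.sum_empty] at hnorm
    exact zero_ne_one hnorm
  obtain ⟨ω0⟩ := hΩ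
  -- positivity of margins
  have P3 : ∀ a b h, 0 < margin p (fun ω => (A ω, B ω, H ω)) (a, b, h) := by
    intro a b h
    refine margin_pos p hpos _ _ ?_
    obtain ⟨ω, h1, h2, h3⟩ := hsurj a b h
    exact ⟨ω, by simp [h1, h2, h3]⟩
  have PAH : ∀ a h, 0 < margin p (fun ω => (A ω, H ω)) (a, h) := by
    intro a h
    refine margin_pos p hpos _ _ ?_
    obtain ⟨ω, h1, h2, h3⟩ := hsurj a (B ω0) h
    exact ⟨ω, by simp [h1, h3]⟩
  have PBH : ∀ b h, 0 < margin p (fun ω => (B ω, H ω)) (b, h) := by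
    intro b h
    refine margin_pos p hpos _ _ ?_
    obtain ⟨ω, h1, h2, h3⟩ := hsurj (A ω0) b h
    exact ⟨ω, by simp [h2, h3]⟩
  have PH : ∀ h, 0 < margin p H h := by
    intro h
    refine margin_pos p hpos _ _ ?_
    obtain ⟨ω, h1, h2, h3⟩ := hsurj (A ω0) (B ω0) h
    exact ⟨ω, h3⟩
  have P3Z : ∀ a b d, 0 < margin p (fun ω => (A ω, B ω, Z (H ω))) (a, b, d) := by
    intro a b d
    obtain ⟨h0, rfl⟩ := hZ d
    refine margin_pos p hpos _ _ ?_
    obtain ⟨ω, h1, h2, h3⟩ := hsurj a b h0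
    exact ⟨ω, by simp [h1, h2, h3]⟩
  have PAZ : ∀ a d, 0 < margin p (fun ω => (A ω, Z (H ω))) (a, d) := by
    intro a d
    obtain ⟨h0, rfl⟩ := hZ d
    refine margin_pos p hpos _ _ ?_
    obtain ⟨ω, h1, h2, h3⟩ := hsurj a (B ω0) h0
    exact ⟨ω, by simp [h1, h3]⟩
  have PBZ : ∀ b d, 0 < margin p (fun ω => (B ω, Z (H ω))) (b, d) := by
    intro b d
    obtain ⟨h0, rfl⟩ := hZ d
    refine margin_pos p hpos _ _ ?_
    obtain ⟨ω, h1, h2, h3⟩ := hsurj (A ω0) b h0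
    exact ⟨ω, by simp [h2, h3]⟩
  have PZ : ∀ d, 0 < margin p (fun ω => Z (H ω)) d := by
    intro d
    obtain ⟨h0, rfl⟩ := hZ d
    refine margin_pos p hpos _ _ ?_
    obtain ⟨ω, h1, h2, h3⟩ := hsurj (A ω0) (B ω0) h0
    exact ⟨ω, by simp [h3]⟩

  -- abbreviate margins
  simp only [condMI]
  set m3 := margin p (fun ω => (A ω, B ω, H ω)) with hm3
  set mAH := margin p (fun ω => (A ω, H ω)) with hmAH
  set mBH := margin p (fun ω => (B ω, H ω)) with hmBH
  set mH := margin p H with hmH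
  set m3z := margin p (fun ω => (A ω, B ω, Z (H ω))) with hm3z
  set mAZ := margin p (fun ω => (A ω, Z (H ω))) with hmAZ
  set mBZ := margin p (fun ω => (B ω, Z (H ω))) with hmBZ
  set mZ := margin p (fun ω => Z (H ω)) with hmZ

  have stepA :
      (∑ a : α, ∑ b : β, ∑ d : δ,
        m3z (a, b, d) * Real.log (m3z (a, b, d) / mZ d / (mAZ (a, d) / mZ d * (mBZ (b, d) / mZ d))))
      = ∑ a : α, ∑ b : β, ∑ h : γ,
        m3 (a, b, h) * Real.log (m3z (a, b, Z h) / mZ (Z h) /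
          (mAZ (a, Z h) / mZ (Z h) * (mBZ (b, Z h) / mZ (Z h)))) := by
    refine Finset.sum_congr rfl fun a _ => Finset.sum_congr rfl fun b _ => ?_
    rw [← sum_fiber (fun h => m3 (a, b, h)) Z
      (fun d => Real.log (m3z (a, b, d) / mZ d / (mAZ (a, d) / mZ d * (mBZ (b, d) / mZ d))))]
    exact Finset.sum_congr rfl fun d _ => by rw [fABZ]
  rw [stepA, ← sub_nonneg, ← Finset.sum_sub_distrib]
  simp only [← Finset.sum_sub_distrib]
  have diff : ∀ a b h,
      m3 (a, b, h) * Real.log (m3z (a, b, Z h) / mZ (Z h) /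
          (mAZ (a, Z h) / mZ (Z h) * (mBZ (b, Z h) / mZ (Z h)))) -
        m3 (a, b, h) * Real.log (m3 (a, b, h) / mH h / (mAH (a, h) / mH h * (mBH (b, h) / mH h)))
      = m3 (a, b, h) * Real.log (mBH (b, h) / (mBZ (b, Z h) * mH h / mZ (Z h))) := by
    intro a b h
    have hZx : (0:ℝ) < m3z (a, b, Z h) / mZ (Z h) /
        (mAZ (a, Z h) / mZ (Z h) * (mBZ (b, Z h) / mZ (Z h))) :=
      div_pos (div_pos (P3Z a b (Z h)) (PZ _))
        (mul_pos (div_pos (PAZ a (Z h)) (PZ _)) (div_pos (PBZ b (Z h)) (PZ _)))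
    have hHx : (0:ℝ) < m3 (a, b, h) / mH h / (mAH (a, h) / mH h * (mBH (b, h) / mH h)) :=
      div_pos (div_pos (P3 a b h) (PH _))
        (mul_pos (div_pos (PAH a h) (PH _)) (div_pos (PBH b h) (PH _)))
    rw [← mul_sub, ← Real.log_div hZx.ne' hHx.ne']
    congr 2
    have e : m3z (a, b, Z h) = m3 (a, b, h) * mAZ (a, Z h) / mAH (a, h) := by
      rw [eq_div_iff (PAH a h).ne']
      linarith [hCI a b h]
    rw [e]
    field_simp [(P3 a b h).ne', (PAH a h).ne', (PH h).ne', (PZ (Z h)).ne',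
      (PAZ a (Z h)).ne', (PBZ b (Z h)).ne', (PBH b h).ne']
  simp only [diff]
  -- reorder sums and integrate out a
  have reorder :
      (∑ a : α, ∑ b : β, ∑ h : γ,
        m3 (a, b, h) * Real.log (mBH (b, h) / (mBZ (b, Z h) * mH h / mZ (Z h))))
      = ∑ b : β, ∑ h : γ,
        mBH (b, h) * Real.log (mBH (b, h) / (mBZ (b, Z h) * mH h / mZ (Z h))) := by
    rw [Finset.sum_comm]
    refine Finset.sum_congr rfl fun b _ => ?_
    rw [Finset.sum_comm]
    refine Finset.sum_congr rfl fun h _ => ?_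
    rw [← Finset.sum_mul, ← fBHa]
  rw [reorder]
  have hsu : ∑ x : β × γ, mBH x = 1 := by rw [hmBH, sum_margin, hnorm]
  have hsv : ∑ x : β × γ, mBZ (x.1, Z x.2) * mH x.2 / mZ (Z x.2) = 1 := by
    rw [Fintype.sum_prod_type, Finset.sum_comm]
    have key : ∀ h : γ, (∑ b : β, mBZ (b, Z h) * mH h / mZ (Z h)) = mH h := by
      intro h
      rw [← Finset.sum_div, ← Finset.sum_mul, ← fBZb, mul_comm,
        mul_div_assoc, div_self (PZ (Z h)).ne', mul_one]
    rw [Finset.sum_congr rfl fun h _ => key h, hmH, sum_margin, hnorm]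
  have G : 0 ≤ ∑ x : β × γ,
      mBH x * Real.log (mBH x / (mBZ (x.1, Z x.2) * mH x.2 / mZ (Z x.2))) := by
    refine gibbs _ _ (fun x => PBH x.1 x.2)
      (fun x => div_pos (mul_pos (PBZ x.1 (Z x.2)) (PH x.2)) (PZ (Z x.2))) ?_
    rw [hsu, hsv]
  refine le_trans G (le_of_eq ?_)
  rw [Fintype.sum_prod_type]




lemma condProb_mul_margin {Ω α β : Type*} [Fintype Ω] [DecidableEq α] [DecidableEq β]
    (p : Ω → ℝ) (f : Ω → α) (g : Ω → β) (a : α) (c : β) (h : margin p g c ≠ 0) :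
    margin p (fun ω => (f ω, g ω)) (a, c) = condProb p f g a c * margin p g c := by
  rw [condProb, div_mul_cancel₀ _ h]


/-- Discrete-time form of the hierarchy inequality (Eq. (14)): for a strictly positive pmf on
trajectories satisfying the bipartite Markov property, the multi-time-step transfer entropy is
bounded above by the single-time-step transfer entropy:
`I(X_k : Y_{k+1} | (Y_0,…,Y_k)) ≤ I(X_k : Y_{k+1} | Y_k)`. -/
theorem multi_transfer_le_single_transfer {X Y : Type*} [Fintype X] [Fintype Y]
    [DecidableEq X] [DecidableEq Y] (k : ℕ)
    (p : (Fin (k + 2) → X × Y) → ℝ)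
    (hpos : ∀ ω, 0 < p ω) (hnorm : ∑ ω, p ω = 1)
    (hbip : BipartiteMarkov k p) :
    condMI p (fun t => (t ⟨k, by omega⟩).1) (fun t => (t (Fin.last (k + 1))).2)
        (fun t (i : Fin (k + 1)) => (t i.castSucc).2) ≤
      condMI p (fun t => (t ⟨k, by omega⟩).1) (fun t => (t (Fin.last (k + 1))).2)
        (fun t => (t ⟨k, by omega⟩).2) := by
  classical
  -- nonemptiness
  have hΩ : Nonempty (Fin (k + 2) → X × Y) := by
    by_contra hc
    rw [not_nonempty_iff] at hc
    rw [Finset.univ_eq_empty, Finset.sum_empty] at hnorm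
    exact zero_ne_one hnorm
  obtain ⟨ω0⟩ := hΩ
  set x0 : X := (ω0 0).1 with hx0
  -- observables
  set W : (Fin (k + 2) → X × Y) → X × Y := fun t => t (Fin.last (k + 1)) with hW
  set P : (Fin (k + 2) → X × Y) → X × Y := fun t => t ((Fin.last k).castSucc) with hP
  set R : (Fin (k + 2) → X × Y) → (Fin (k + 1) → X × Y) :=
    fun t i => t (Fin.castLE (by omega) i) with hR
  -- the bipartite Markov property at the last step
  have L2 : ∀ (r : Fin (k + 1) → X × Y) (x' : X) (y' : Y),
      condProb p W R (x', y') r =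
        condProb p (fun t => (W t).1) P x' (r (Fin.last k)) *
          condProb p (fun t => (W t).2) P y' (r (Fin.last k)) :=
    fun r x' y' => hbip (Fin.last k) r x' y'
  -- positivity of trajectory margins
  have PR : ∀ r : Fin (k + 1) → X × Y, 0 < margin p R r := by
    intro r
    refine margin_pos p hpos _ _ ⟨fun i => if hlt : i.1 < k + 1 then r ⟨i.1, hlt⟩ else r 0, ?_⟩
    funext i
    simp only [hR]
    exact dif_pos i.isLt
  have PP : ∀ z : X × Y, 0 < margin p P z :=
    fun z => margin_pos p hpos _ _ ⟨fun _ => z, rfl⟩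
  -- the conditional x-probabilities sum to 1
  have L3 : ∀ z : X × Y, ∑ x' : X, condProb p (fun t => (W t).1) P x' z = 1 := by
    intro z
    have hnum : ∑ x' : X, margin p (fun t => ((W t).1, P t)) (x', z) = margin p P z := by
      rw [margin_factor p P (fun t => ((W t).1, P t)) (fun v => v.2) (fun ω => rfl) z]
      simp [Fintype.sum_prod_type, Finset.sum_ite_eq', Finset.sum_ite_eq]
    simp only [condProb]
    rw [← Finset.sum_div, hnum, div_self (PP z).ne']
  -- one-step conditional independence, marginalized over x'
  have L4 : ∀ (b : Y) (r : Fin (k + 1) → X × Y),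
      margin p (fun t => ((W t).2, R t)) (b, r) =
        condProb p (fun t => (W t).2) P b (r (Fin.last k)) * margin p R r := by
    intro b r
    have expand : margin p (fun t => ((W t).2, R t)) (b, r)
        = ∑ x' : X, margin p (fun t => (W t, R t)) ((x', b), r) := by
      rw [margin_factor p _ (fun t => (W t, R t)) (fun v => (v.1.2, v.2)) (fun ω => rfl) (b, r)]
      simp [Fintype.sum_prod_type, Prod.mk.injEq, ite_and, Finset.sum_ite_eq', Finset.sum_ite_eq]
    rw [expand]
    have each : ∀ x' : X, margin p (fun t => (W t, R t)) ((x', b), r)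
        = condProb p (fun t => (W t).1) P x' (r (Fin.last k)) *
            (condProb p (fun t => (W t).2) P b (r (Fin.last k)) * margin p R r) := by
      intro x'
      rw [condProb_mul_margin p W R (x', b) r (PR r).ne', L2 r x' b, mul_assoc]
    simp only [each]
    rw [← Finset.sum_mul, L3 (r (Fin.last k)), one_mul]
  -- factorization of the (A,B,H) margin
  have q3eq : ∀ (a : X) (b : Y) (h : Fin (k + 1) → Y),
      margin p (fun ω => ((R ω (Fin.last k)).1, (W ω).2, fun i => (R ω i).2)) (a, b, h)
      = condProb p (fun t => (W t).2) P b (a, h (Fin.last k)) *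
        margin p (fun ω => ((R ω (Fin.last k)).1, fun i => (R ω i).2)) (a, h) := by
    intro a b h
    have e1 : margin p (fun ω => ((R ω (Fin.last k)).1, (W ω).2, fun i => (R ω i).2)) (a, b, h)
        = ∑ r : Fin (k + 1) → X × Y,
          if ((r (Fin.last k)).1, fun i => (r i).2) = (a, h) then
            margin p (fun t => ((W t).2, R t)) (b, r) else 0 := by
      rw [margin_factor p (fun ω => ((R ω (Fin.last k)).1, (W ω).2, fun i => (R ω i).2))
        (fun t => ((W t).2, R t))
        (fun v => ((v.2 (Fin.last k)).1, v.1, fun i => (v.2 i).2)) (fun ω => rfl) (a, b, h)]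
      rw [Fintype.sum_prod_type, Finset.sum_comm]
      refine Finset.sum_congr rfl fun r _ => ?_
      simp [Prod.mk.injEq, ite_and, Finset.sum_ite_eq', Finset.sum_ite_eq]
    have e2 : margin p (fun ω => ((R ω (Fin.last k)).1, fun i => (R ω i).2)) (a, h)
        = ∑ r : Fin (k + 1) → X × Y,
          if ((r (Fin.last k)).1, fun i => (r i).2) = (a, h) then margin p R r else 0 :=
      margin_factor p _ R (fun r => ((r (Fin.last k)).1, fun i => (r i).2)) (fun ω => rfl) (a, h)
    rw [e1, e2, Finset.mul_sum]
    refine Finset.sum_congr rfl fun r _ => ?_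
    by_cases hc : ((r (Fin.last k)).1, fun i : Fin (k + 1) => (r i).2) = (a, h)
    · rw [if_pos hc, if_pos hc, L4 b r]
      have hc1 : (r (Fin.last k)).1 = a := congrArg Prod.fst hc
      have hc2 : (fun i : Fin (k + 1) => (r i).2) = h := congrArg Prod.snd hc
      have hrl : r (Fin.last k) = (a, h (Fin.last k)) := by
        refine Prod.ext hc1 ?_
        rw [← hc2]
      rw [hrl]
    · rw [if_neg hc, if_neg hc, mul_zero]
  -- factorization of the (A,B,Z∘H) margin
  have PzEq : ∀ (a : X) (d : Y),
      margin p (fun ω => ((P ω).1, (P ω).2)) (a, d) = margin p P (a, d) := fun a d => rfl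
  have q3zeq : ∀ (a : X) (b : Y) (d : Y),
      margin p (fun ω => ((P ω).1, (W ω).2, (P ω).2)) (a, b, d)
      = condProb p (fun t => (W t).2) P b (a, d) *
        margin p (fun ω => ((P ω).1, (P ω).2)) (a, d) := by
    intro a b d
    have e3 : margin p (fun ω => ((P ω).1, (W ω).2, (P ω).2)) (a, b, d)
        = margin p (fun t => ((W t).2, P t)) (b, (a, d)) := by
      rw [margin_factor p (fun ω => ((P ω).1, (W ω).2, (P ω).2)) (fun t => ((W t).2, P t))
        (fun v => (v.2.1, v.1, v.2.2)) (fun ω => rfl) (a, b, d)]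
      simp [Fintype.sum_prod_type, Prod.mk.injEq, ite_and, Finset.sum_ite_eq',
        Finset.sum_ite_eq]
    rw [e3, condProb_mul_margin p (fun t => (W t).2) P b (a, d) (PP (a, d)).ne', PzEq a d]
  -- surjectivity of the observables
  have hsurj : ∀ (a : X) (b : Y) (h : Fin (k + 1) → Y), ∃ ω : Fin (k + 2) → X × Y,
      (ω ⟨k, by omega⟩).1 = a ∧ (ω (Fin.last (k + 1))).2 = b ∧
        (fun i : Fin (k + 1) => (ω i.castSucc).2) = h := by
    intro a b h
    refine ⟨fun i => (if i.1 = k then a else x0,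
      if hlt : i.1 < k + 1 then h ⟨i.1, hlt⟩ else b), ?_, ?_, ?_⟩
    · exact if_pos rfl
    · exact dif_neg (by rw [Fin.val_last]; omega)
    · funext i
      exact dif_pos i.isLt
  have hZs : Function.Surjective (fun h : Fin (k + 1) → Y => h (Fin.last k)) :=
    fun d => ⟨fun _ => d, rfl⟩
  -- the conditional-independence identity
  have hCI : ∀ (a : X) (b : Y) (h : Fin (k + 1) → Y),
      margin p (fun ω => ((R ω (Fin.last k)).1, (W ω).2, fun i => (R ω i).2)) (a, b, h) *
        margin p (fun ω => ((P ω).1, (P ω).2)) (a, h (Fin.last k)) =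
      margin p (fun ω => ((P ω).1, (W ω).2, (P ω).2)) (a, b, h (Fin.last k)) *
        margin p (fun ω => ((R ω (Fin.last k)).1, fun i => (R ω i).2)) (a, h) := by
    intro a b h
    rw [q3eq a b h, q3zeq a b (h (Fin.last k))]
    ring
  exact condMI_comp_le p hpos hnorm _ _ _
    (fun h : Fin (k + 1) → Y => h (Fin.last k)) hsurj hCI hZs
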